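/- Let Φ : ℚ^∞ → ℚ^∞ be the shift map. If A is a finite set with |A + Φ(A)| ≤ K|A|, then |A + Φ(A) + Φ(A) + Φ(A)| ≤ K^9|A|. -/
import Mathlib

open scoped Pointwise

/-- The shift map `e_k ↦ e_{k+1}` on finitely supported rational sequences. -/
noncomputable def shiftMap : (ℕ →₀ ℚ) → (ℕ →₀ ℚ) :=
  Finsupp.embDomain ⟨Nat.succ, Nat.succ_injective⟩

theorem triple_shift_sum_bound (A : Finset (ℕ →₀ ℚ)) (K : ℝ)
    (h : ((A + A.image shiftMap).card : ℝ) ≤ K * A.card) :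
    ((A + A.image shiftMap + A.image shiftMap + A.image shiftMap).card : ℝ) ≤
      K ^ 9 * A.card := by
  set B := A.image shiftMap with hBdef
  obtain rfl | hA := A.eq_empty_or_nonempty
  · simp
  have hBcard : B.card = A.card := by
    rw [hBdef]
    exact Finset.card_image_of_injective _ (Finsupp.embDomain_injective _)
  have hB : B.Nonempty := by
    rwa [← Finset.card_pos, hBcard, Finset.card_pos]
  have hApos : (0 : ℝ) < A.card := by exact_mod_cast hA.card_pos
  have hK1 : (1 : ℝ) ≤ K := by
    have h1 : (A.card : ℝ) ≤ ((A + B).card : ℝ) := by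
      exact_mod_cast Finset.card_le_card_add_right hB
    nlinarith
  have hK0 : (0 : ℝ) ≤ K := le_trans zero_le_one hK1
  -- Plünnecke–Ruzsa: |4B| ≤ K^4 |A|
  have hP : ((4 • B).card : ℝ) ≤ K ^ 4 * A.card := by
    have := Finset.pluennecke_ruzsa_inequality_nsmul_add hA B 4
    have h' : ((4 • B).card : ℝ) ≤ (((A + B).card : ℝ) / A.card) ^ 4 * A.card := by
      have h2 := (NNRat.cast_le (K := ℝ)).2 this
      push_cast at h2
      convert h2 using 2
    refine h'.trans ?_
    have : (((A + B).card : ℝ) / A.card) ≤ K := by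
      rw [div_le_iff₀ hApos]; exact h
    have hnn : (0 : ℝ) ≤ ((A + B).card : ℝ) / A.card := by positivity
    gcongr
  -- Ruzsa triangle inequality
  have hR : ((A + (B + B + B)).card : ℝ) * B.card ≤ ((A + B).card : ℝ) * ((B + (B + B + B)).card : ℝ) := by
    exact_mod_cast Finset.ruzsa_triangle_inequality_add_add_add A B (B + B + B)
  have h4B : B + (B + B + B) = 4 • B := by
    rw [show (4 : ℕ) • B = B + B + B + B by
      rw [succ_nsmul, succ_nsmul, two_nsmul]]
    simp [add_assoc]
  have hassoc : A + B + B + B = A + (B + B + B) := by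
    simp [add_assoc]
  rw [h4B] at hR
  rw [hassoc]
  have hK5 : ((A + (B + B + B)).card : ℝ) ≤ K ^ 5 * A.card := by
    have hBpos : (0 : ℝ) < B.card := by rw [hBcard]; exact hApos
    rw [← hBcard] at hApos ⊢
    have : ((A + (B + B + B)).card : ℝ) * B.card ≤ (K * B.card) * (K ^ 4 * B.card) := by
      calc ((A + (B + B + B)).card : ℝ) * B.card ≤ ((A + B).card : ℝ) * ((4 • B).card : ℝ) := hR
        _ ≤ (K * B.card) * (K ^ 4 * B.card) := by
            apply mul_le_mul _ _ (by positivity) (by positivity)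
            · rwa [hBcard]
            · rwa [hBcard]
    nlinarith [this, hBpos]
  refine hK5.trans ?_
  have : K ^ 5 ≤ K ^ 9 := pow_le_pow_right₀ hK1 (by norm_num)
  nlinarith
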